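/- Let C be an ample concept class over X and let r : C → X(C) be a bijection. Then the following conditions are equivalent: (R1) ∪-non-clashing: for all distinct c, c' ∈ C, c ∩ (r(c) ∪ r(c')) ≠ c' ∩ (r(c) ∪ r(c')); (R2) reconstruction: for every realizable sample (Y, s) of C there is a unique c ∈ C with c ∩ Y = s and r(c) ⊆ Y; (R3) cube injectivity: for every cube B of 2^X, the map c ↦ r(c) ∩ supp(B) is injective on C ∩ B; (R4) Δ-non-clashing: for all distinct c, c' ∈ C, c ∩ (r(c) Δ r(c')) ≠ c' ∩ (r(c) Δ r(c')). Moreover, any map r : C → X(C) satisfying (R4) (not assumed bijective) is automatically a bijection. -/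

import Mathlib

variable {X : Type} [Fintype X] [DecidableEq X]

/-- Hamming distance between two subsets of `X` (size of symmetric difference). -/
def hdist (c c' : Finset X) : ℕ := ((c \ c') ∪ (c' \ c)).card

/-- The restriction `C|Y = {c ∩ Y : c ∈ C}`. -/
def restrictTo (C : Finset (Finset X)) (Y : Finset X) : Finset (Finset X) :=
  C.image (· ∩ Y)

/-- `Y` is shattered by `C`, i.e. `C|Y = 2^Y`. -/
def Shatters (C : Finset (Finset X)) (Y : Finset X) : Prop :=
  ∀ s ∈ Y.powerset, ∃ c ∈ C, c ∩ Y = s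

instance (C : Finset (Finset X)) : DecidablePred (Shatters C) := fun _ => by
  unfold Shatters; infer_instance

/-- The family `X̄(C)` of all sets shattered by `C`. -/
def shatteredSets (C : Finset (Finset X)) : Finset (Finset X) :=
  Finset.univ.filter (Shatters C)

/-- The VC dimension of `C`: maximum size of a shattered set. -/
def vcDim (C : Finset (Finset X)) : ℕ := (shatteredSets C).sup Finset.card

/-- `C` is ample: `|C| = |X̄(C)|`. -/
def IsAmple (C : Finset (Finset X)) : Prop := C.card = (shatteredSets C).card

/-- `C` is a maximum class of VC dimension `d`. -/
def IsMaximumClass (C : Finset (Finset X)) (d : ℕ) : Prop :=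
  vcDim C = d ∧ C.card = ∑ i ∈ Finset.range (d + 1), (Fintype.card X).choose i

/-- `B` is a cube with support `Y`: `B = {t ∪ s : s ⊆ Y}` for some `t ⊆ X \ Y`. -/
def IsCubeS (B : Finset (Finset X)) (Y : Finset X) : Prop :=
  ∃ t : Finset X, t ∩ Y = ∅ ∧ B = Y.powerset.image (fun s => t ∪ s)

/-- `B` is a cube. -/
def IsCube (B : Finset (Finset X)) : Prop := ∃ Y, IsCubeS B Y

/-- `B` is a cube of `C`: a cube contained in `C`. -/
def IsCubeOf (C B : Finset (Finset X)) : Prop := B ⊆ C ∧ IsCube B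

/-- `B` is a maximal cube of `C` (maximal under inclusion among cubes of `C`). -/
def IsMaximalCubeOf (C B : Finset (Finset X)) : Prop :=
  IsCubeOf C B ∧ ∀ B', IsCubeOf C B' → B ⊆ B' → B = B'

/-- `c` is a corner of `C`: a concept of `C` belonging to a unique maximal cube of `C`. -/
def IsCornerOf (C : Finset (Finset X)) (c : Finset X) : Prop :=
  c ∈ C ∧ ∃! B, IsMaximalCubeOf C B ∧ c ∈ B

/-- The one-inclusion graph `G(C)`. -/
def oneInclusionGraph (C : Finset (Finset X)) : SimpleGraph {c : Finset X // c ∈ C} where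
  Adj c c' := hdist c.1 c'.1 = 1
  symm := by
    constructor
    intro a b h
    simpa [hdist, Finset.union_comm] using h
  loopless := by
    constructor
    intro a h
    simp [hdist] at h

/-- `C` is isometric: `G(C)` is connected and graph distances equal Hamming distances. -/
def IsIsometric (C : Finset (Finset X)) : Prop :=
  (oneInclusionGraph C).Connected ∧
  ∀ c c' : {c : Finset X // c ∈ C}, (oneInclusionGraph C).dist c c' = hdist c.1 c'.1

/-- `C` is weakly isometric: `G(C)` is connected and graph distances equal Hamming
distances for pairs at Hamming distance at most 2. -/
def IsWeaklyIsometric (C : Finset (Finset X)) : Prop :=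
  (oneInclusionGraph C).Connected ∧
  ∀ c c' : {c : Finset X // c ∈ C}, hdist c.1 c'.1 ≤ 2 →
    (oneInclusionGraph C).dist c c' = hdist c.1 c'.1

/-- A list of concepts is a corner peeling if it has no duplicates and each element is a
corner of the corresponding level set. -/
def IsCornerPeeling (l : List (Finset X)) : Prop :=
  l.Nodup ∧ ∀ i (h : i < l.length), IsCornerOf ((l.take (i + 1)).toFinset) (l.get ⟨i, h⟩)

/-- `C` is dismantlable: it admits a corner peeling ordering of all its concepts. -/
def Dismantlable (C : Finset (Finset X)) : Prop :=
  ∃ l : List (Finset X), l.toFinset = C ∧ IsCornerPeeling l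

/-- Non-clashing condition for a map `r`. -/
def NonClashing (C : Finset (Finset X)) (r : Finset X → Finset X) : Prop :=
  ∀ c ∈ C, ∀ c' ∈ C, c ≠ c' → c ∩ (r c ∪ r c') ≠ c' ∩ (r c ∪ r c')

/-- `r` is a representation map for `C`: a non-clashing bijection from `C` onto `X̄(C)`. -/
def IsRepMap (C : Finset (Finset X)) (r : Finset X → Finset X) : Prop :=
  (∀ c ∈ C, r c ∈ shatteredSets C) ∧
  Set.InjOn r ↑C ∧
  (∀ Y ∈ shatteredSets C, ∃ c ∈ C, r c = Y) ∧
  NonClashing C r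

/-- `C` admits an unlabeled sample compression scheme of size `k`. -/
def HasUSCS (C : Finset (Finset X)) (k : ℕ) : Prop :=
  ∃ (α : Finset X → Finset X → Finset X) (β : Finset X → Finset X),
    ∀ (Y : Finset X), ∀ c ∈ C,
      α Y (c ∩ Y) ⊆ Y ∧ (α Y (c ∩ Y)).card ≤ k ∧
      β (α Y (c ∩ Y)) ∈ C ∧ β (α Y (c ∩ Y)) ∩ Y = c ∩ Y

/-- The cube of `2^X` with support `Y` containing `c`. -/
def cubeAt (c Y : Finset X) : Finset (Finset X) :=
  Y.powerset.image (fun s => (c \ Y) ∪ s)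

/-- Condition (C1): for every `c ∈ C`, the cube with support `r c` containing `c`
is a cube of `C`. -/
def CondC1 (C : Finset (Finset X)) (r : Finset X → Finset X) : Prop :=
  ∀ c ∈ C, cubeAt c (r c) ⊆ C

/-- Condition (C2): every cube of `C` has a unique concept `c` with `r c ∩ supp B = ∅`. -/
def CondC2 (C : Finset (Finset X)) (r : Finset X → Finset X) : Prop :=
  ∀ B Y, B ⊆ C → IsCubeS B Y → ∃! c, c ∈ B ∧ r c ∩ Y = ∅

/-- The facet of the cross-polytope corresponding to a subset `c ⊆ X`:
`+x ∈ σ_c` iff `x ∈ c` (where `+x = Sum.inl x` and `-x = Sum.inr x`). -/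
def facet (c : Finset X) : Finset (X ⊕ X) :=
  c.image Sum.inl ∪ (Finset.univ \ c).image Sum.inr

/-- A list of facets of the cross-polytope is a partial shelling. -/
def IsPartialShelling (L : List (Finset (X ⊕ X))) : Prop :=
  L.Nodup ∧ ∀ i j, i < j → j < L.length →
    ∃ k < j, ((L.getD k ∅) ∩ (L.getD j ∅)).card = Fintype.card X - 1 ∧
      (L.getD i ∅) ∩ (L.getD j ∅) ⊆ (L.getD k ∅) ∩ (L.getD j ∅)

/-- `Q` is an incomplete cube for `(C, D)` with support `σ`: a cube of `C` whose
support `σ` is a missed simplex (shattered by `C` but not by `D`). -/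
def IsIncompleteCube (C D Q : Finset (Finset X)) (σ : Finset X) : Prop :=
  Q ⊆ C ∧ IsCubeS Q σ ∧ Shatters C σ ∧ ¬ Shatters D σ

/-- `c` is the source of the incomplete cube `Q` with support `σ`:
`c ∈ Q` and `c ∩ σ ∉ D|σ`. -/
def IsSource (D Q : Finset (Finset X)) (σ : Finset X) (c : Finset X) : Prop :=
  c ∈ Q ∧ c ∩ σ ∉ restrictTo D σ

/-- The restriction `C_x = C|(X \ {x})`, with concepts viewed as subsets of `X`
avoiding `x`. -/
def restrictX (C : Finset (Finset X)) (x : X) : Finset (Finset X) :=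
  C.image (·.erase x)

/-- The reduction `C^x = {c ⊆ X \ {x} : c ∈ C and c ∪ {x} ∈ C}`. -/
def reduction (C : Finset (Finset X)) (x : X) : Finset (Finset X) :=
  C.filter (fun c => x ∉ c ∧ insert x c ∈ C)

/-- The interval `B(c,c') = {t : d(c,t) + d(t,c') = d(c,c')}`. -/
def interval (c c' : Finset X) : Finset (Finset X) :=
  Finset.univ.filter (fun t => hdist c t + hdist t c' = hdist c c')

/-- `C'` is convex in `C`. -/
def IsConvexIn (C C' : Finset (Finset X)) : Prop :=
  ∀ c ∈ C', ∀ c'' ∈ C', interval c c'' ∩ C ⊆ C'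

/-- `C'` is locally convex in `C`. -/
def IsLocallyConvexIn (C C' : Finset (Finset X)) : Prop :=
  ∀ c ∈ C', ∀ c'' ∈ C', hdist c c'' = 2 → interval c c'' ∩ C ⊆ C'

/-- `C` is a conditional antimatroid: contains `∅`, closed under intersection, and
every concept is generated by its extremal points. -/
def IsCondAntimatroid (C : Finset (Finset X)) : Prop :=
  ∅ ∈ C ∧ (∀ c ∈ C, ∀ c' ∈ C, c ∩ c' ∈ C) ∧
  ∀ c ∈ C, ∀ c' ∈ C, (c.filter (fun x => c.erase x ∈ C)) ⊆ c' → c ⊆ c'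

section AmpleAux

variable {X : Type} [Fintype X] [DecidableEq X]

open Finset

lemma mem_shatteredSets' {C : Finset (Finset X)} {Z : Finset X} :
    Z ∈ shatteredSets C ↔ _root_.Shatters C Z := by
  simp [shatteredSets]

lemma shatters_iff {C : Finset (Finset X)} {Z : Finset X} :
    _root_.Shatters C Z ↔ ∀ s ⊆ Z, ∃ c ∈ C, c ∩ Z = s := by
  simp [_root_.Shatters, Finset.mem_powerset]

lemma shatters_mono {C C' : Finset (Finset X)} (h : C ⊆ C') {Z : Finset X}
    (hZ : _root_.Shatters C Z) : _root_.Shatters C' Z := by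
  intro s hs
  obtain ⟨c, hc, hcz⟩ := hZ s hs
  exact ⟨c, h hc, hcz⟩

lemma shatters_nonempty {C : Finset (Finset X)} {Z : Finset X} (h : _root_.Shatters C Z) :
    ∃ c ∈ C, Z ⊆ c := by
  obtain ⟨c, hc, hcz⟩ := h Z (Finset.mem_powerset_self Z)
  exact ⟨c, hc, by rw [← hcz]; exact Finset.inter_subset_left⟩

lemma mem_reduction {C : Finset (Finset X)} {x : X} {c : Finset X} :
    c ∈ reduction C x ↔ c ∈ C ∧ x ∉ c ∧ insert x c ∈ C := by
  simp [reduction]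

lemma mem_restrictX {C : Finset (Finset X)} {x : X} {d : Finset X} :
    d ∈ restrictX C x ↔ ∃ c ∈ C, c.erase x = d := by
  simp [restrictX]

/-- the decomposition of cardinalities -/
lemma card_decomp (C : Finset (Finset X)) (x : X) :
    C.card = (restrictX C x).card + (reduction C x).card := by
  have hmap : ∀ c ∈ C, c.erase x ∈ restrictX C x := by
    intro c hc; exact mem_restrictX.2 ⟨c, hc, rfl⟩
  rw [Finset.card_eq_sum_card_fiberwise hmap]
  have key : ∀ d ∈ restrictX C x,
      (C.filter (fun c => c.erase x = d)).card
        = 1 + (if d ∈ reduction C x then 1 else 0) := by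
    intro d hd
    obtain ⟨c₀, hc₀, hc₀d⟩ := mem_restrictX.1 hd
    have hxd : x ∉ d := by rw [← hc₀d]; exact Finset.notMem_erase x c₀
    have hfib : C.filter (fun c => c.erase x = d)
        = ({d, insert x d} : Finset (Finset X)).filter (fun c => c ∈ C) := by
      ext c
      simp only [Finset.mem_filter, Finset.mem_insert, Finset.mem_singleton]
      constructor
      · rintro ⟨hcC, hce⟩
        refine ⟨?_, hcC⟩
        by_cases hx : x ∈ c
        · right; rw [← hce, Finset.insert_erase hx]
        · left; rw [← hce, Finset.erase_eq_of_notMem hx]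
      · rintro ⟨hc | hc, hcC⟩
        · subst hc; exact ⟨hcC, Finset.erase_eq_of_notMem hxd⟩
        · subst hc; exact ⟨hcC, Finset.erase_insert hxd⟩
    rw [hfib]
    have hne : d ≠ insert x d := by
      intro h; exact hxd (h ▸ Finset.mem_insert_self x d)
    have hc₀' : d ∈ C ∨ insert x d ∈ C := by
      by_cases hx : x ∈ c₀
      · right; rw [← hc₀d, Finset.insert_erase hx]; exact hc₀
      · left; rw [← hc₀d, Finset.erase_eq_of_notMem hx]; exact hc₀
    rw [Finset.filter_insert, Finset.filter_singleton]
    by_cases h1 : d ∈ C <;> by_cases h2 : insert x d ∈ C <;>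
      simp [h1, h2, mem_reduction, hxd, hne, Finset.card_insert_of_notMem,
        Finset.notMem_singleton] at hc₀' ⊢
  rw [Finset.sum_congr rfl key, Finset.sum_add_distrib, Finset.sum_const, smul_eq_mul, mul_one]
  congr 1
  have hsub : reduction C x ⊆ restrictX C x := by
    intro e he
    rw [mem_reduction] at he
    exact mem_restrictX.2 ⟨e, he.1, Finset.erase_eq_of_notMem he.2.1⟩
  rw [← Finset.card_filter, Finset.filter_mem_eq_inter, Finset.inter_eq_right.mpr hsub]

end AmpleAux
section AmpleAux2
set_option linter.unusedSectionVars false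

variable {X : Type} [Fintype X] [DecidableEq X]

open Finset

lemma erase_inter_of_not_mem {x : X} {Z c : Finset X} (hxZ : x ∉ Z) :
    c.erase x ∩ Z = c ∩ Z := by
  ext y
  simp only [Finset.mem_inter, Finset.mem_erase]
  constructor
  · rintro ⟨⟨_, h⟩, hZ⟩; exact ⟨h, hZ⟩
  · rintro ⟨hc, hZ⟩; exact ⟨⟨fun h => hxZ (h ▸ hZ), hc⟩, hZ⟩

lemma shat_restrictX (C : Finset (Finset X)) (x : X) :
    shatteredSets (restrictX C x) = (shatteredSets C).filter (fun Z => x ∉ Z) := by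
  ext Z
  simp only [mem_shatteredSets', Finset.mem_filter, mem_shatteredSets']
  constructor
  · intro h
    have hxZ : x ∉ Z := by
      obtain ⟨d, hd, hZd⟩ := shatters_nonempty h
      obtain ⟨c, _, rfl⟩ := mem_restrictX.1 hd
      exact fun hx => Finset.notMem_erase x c (hZd hx)
    refine ⟨fun s hs => ?_, hxZ⟩
    obtain ⟨d, hd, hds⟩ := h s hs
    obtain ⟨c, hc, rfl⟩ := mem_restrictX.1 hd
    exact ⟨c, hc, by rw [← erase_inter_of_not_mem hxZ, hds]⟩
  · rintro ⟨h, hxZ⟩ s hs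
    obtain ⟨c, hc, hcs⟩ := h s hs
    exact ⟨c.erase x, mem_restrictX.2 ⟨c, hc, rfl⟩, by rw [erase_inter_of_not_mem hxZ, hcs]⟩

lemma insert_inter_of_not_mem' {x : X} {c Z : Finset X} (hxc : x ∉ c) :
    c ∩ insert x Z = c ∩ Z := by
  ext y
  simp only [Finset.mem_inter, Finset.mem_insert]
  constructor
  · rintro ⟨hc, rfl | hZ⟩
    · exact absurd hc hxc
    · exact ⟨hc, hZ⟩
  · rintro ⟨hc, hZ⟩; exact ⟨hc, Or.inr hZ⟩

lemma shatters_reduction_lift {C : Finset (Finset X)} {x : X} {Z : Finset X}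
    (h : _root_.Shatters (reduction C x) Z) :
    x ∉ Z ∧ _root_.Shatters C (insert x Z) := by
  have hxZ : x ∉ Z := by
    obtain ⟨c, hc, hZc⟩ := shatters_nonempty h
    exact fun hx => (mem_reduction.1 hc).2.1 (hZc hx)
  refine ⟨hxZ, fun s hs => ?_⟩
  rw [Finset.mem_powerset] at hs
  by_cases hxs : x ∈ s
  · have hs' : s.erase x ⊆ Z := by
      intro y hy
      rcases Finset.mem_erase.1 hy with ⟨hyx, hys⟩
      rcases Finset.mem_insert.1 (hs hys) with rfl | h'
      · exact absurd rfl hyx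
      · exact h'
    obtain ⟨c, hc, hcs⟩ := h (s.erase x) (Finset.mem_powerset.2 hs')
    rcases mem_reduction.1 hc with ⟨hcC, hxc, hins⟩
    refine ⟨insert x c, hins, ?_⟩
    rw [← Finset.insert_inter_distrib, hcs, Finset.insert_erase hxs]
  · have hs' : s ⊆ Z := fun y hy => by
      rcases Finset.mem_insert.1 (hs hy) with rfl | h'
      · exact absurd hy hxs
      · exact h'
    obtain ⟨c, hc, hcs⟩ := h s (Finset.mem_powerset.2 hs')
    rcases mem_reduction.1 hc with ⟨hcC, hxc, _⟩
    exact ⟨c, hcC, by rw [insert_inter_of_not_mem' hxc, hcs]⟩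

/-- measure for induction -/
def muA (C : Finset (Finset X)) : ℕ := ∑ c ∈ C, (c.card + 1)

lemma sum_image_le' (s : Finset (Finset X)) (g : Finset X → Finset X) (f : Finset X → ℕ) :
    ∑ d ∈ s.image g, f d ≤ ∑ c ∈ s, f (g c) := by
  induction s using Finset.cons_induction with
  | empty => simp
  | cons a s ha ih =>
    rw [Finset.cons_eq_insert, Finset.image_insert, Finset.sum_insert ha]
    by_cases h : g a ∈ s.image g
    · rw [Finset.insert_eq_self.2 h]
      exact le_trans ih (Nat.le_add_left _ _)
    · rw [Finset.sum_insert h]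
      exact Nat.add_le_add_left ih _

lemma muA_restrictX_lt {C : Finset (Finset X)} {x : X} {c₀ : Finset X}
    (hc₀ : c₀ ∈ C) (hx : x ∈ c₀) : muA (restrictX C x) < muA C := by
  have h1 : muA (restrictX C x) ≤ ∑ c ∈ C, ((c.erase x).card + 1) :=
    sum_image_le' C (fun c => c.erase x) (fun d => d.card + 1)
  refine lt_of_le_of_lt h1 ?_
  apply Finset.sum_lt_sum (fun i _ => by
    have := Finset.card_erase_le (a := x) (s := i); omega)
  exact ⟨c₀, hc₀, by have := Finset.card_erase_of_mem hx
                     have hpos : 0 < c₀.card := Finset.card_pos.2 ⟨x, hx⟩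
                     omega⟩

lemma muA_reduction_lt {C : Finset (Finset X)} {x : X} {c₀ : Finset X}
    (hc₀ : c₀ ∈ C) (hx : x ∈ c₀) : muA (reduction C x) < muA C := by
  apply Finset.sum_lt_sum_of_subset (Finset.filter_subset _ _) hc₀
  · intro h
    exact (mem_reduction.1 h).2.1 hx
  · omega
  · intro j _ _; exact Nat.zero_le _

lemma shat_reduction_card_le (C : Finset (Finset X)) (x : X) :
    (shatteredSets (reduction C x)).card ≤ ((shatteredSets C).filter (fun Z => x ∈ Z)).card := by
  apply Finset.card_le_card_of_injOn (fun Z => insert x Z)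
  · intro Z hZ
    rw [Finset.mem_coe, mem_shatteredSets'] at hZ
    obtain ⟨hxZ, hsh⟩ := shatters_reduction_lift hZ
    rw [Finset.mem_coe, Finset.mem_filter, mem_shatteredSets']
    exact ⟨hsh, Finset.mem_insert_self x Z⟩
  · intro Z1 h1 Z2 h2 heq
    rw [Finset.mem_coe, mem_shatteredSets'] at h1 h2
    have hx1 := (shatters_reduction_lift h1).1
    have hx2 := (shatters_reduction_lift h2).1
    simp only [] at heq
    have : (insert x Z1).erase x = (insert x Z2).erase x := by rw [heq]
    rwa [Finset.erase_insert hx1, Finset.erase_insert hx2] at this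

theorem pajorN : ∀ (N : ℕ) (C : Finset (Finset X)), muA C ≤ N →
    C.card ≤ (shatteredSets C).card := by
  intro N
  induction N with
  | zero =>
    intro C hC
    have : C = ∅ := by
      by_contra h
      obtain ⟨c, hc⟩ := Finset.nonempty_iff_ne_empty.2 h
      have : 0 < muA C := by
        apply Finset.sum_pos' (fun i _ => Nat.zero_le _) ⟨c, hc, by omega⟩
      omega
    simp [this]
  | succ N ih =>
    intro C hC
    by_cases hne : ∃ c₀ ∈ C, ∃ x, x ∈ c₀
    · obtain ⟨c₀, hc₀, x, hx⟩ := hne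
      have hD := muA_restrictX_lt hc₀ hx
      have hE := muA_reduction_lt hc₀ hx
      have h1 : (restrictX C x).card ≤ (shatteredSets (restrictX C x)).card := ih _ (by omega)
      have h2 : (reduction C x).card ≤ (shatteredSets (reduction C x)).card := ih _ (by omega)
      rw [card_decomp C x]
      calc (restrictX C x).card + (reduction C x).card
          ≤ ((shatteredSets C).filter (fun Z => x ∉ Z)).card
            + ((shatteredSets C).filter (fun Z => x ∈ Z)).card := by
            refine Nat.add_le_add (le_trans h1 ?_) (le_trans h2 (shat_reduction_card_le C x))
            rw [shat_restrictX]
        _ = (shatteredSets C).card := by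
            rw [add_comm]
            exact Finset.card_filter_add_card_filter_not (fun Z => x ∈ Z)
    · push_neg at hne
      by_cases hCe : C = ∅
      · simp [hCe]
      · obtain ⟨c, hc⟩ := Finset.nonempty_iff_ne_empty.2 hCe
        have hce : c = ∅ := by
          by_contra h
          obtain ⟨y, hy⟩ := Finset.nonempty_iff_ne_empty.2 h
          exact hne c hc y hy
        have hCs : C = {∅} := by
          apply Finset.eq_singleton_iff_unique_mem.2
          refine ⟨hce ▸ hc, fun d hd => ?_⟩
          by_contra h
          obtain ⟨y, hy⟩ := Finset.nonempty_iff_ne_empty.2 h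
          exact hne d hd y hy
        have : (∅ : Finset X) ∈ shatteredSets C := by
          rw [mem_shatteredSets']
          intro s hs
          rw [Finset.mem_powerset, Finset.subset_empty] at hs
          exact ⟨∅, hCs ▸ Finset.mem_singleton_self _, by simp [hs]⟩
        calc C.card = 1 := by rw [hCs, Finset.card_singleton]
          _ ≤ (shatteredSets C).card := Finset.card_pos.2 ⟨∅, this⟩

theorem pajor (C : Finset (Finset X)) : C.card ≤ (shatteredSets C).card :=
  pajorN (muA C) C le_rfl

end AmpleAux2
section AmpleAux3
set_option linter.unusedSectionVars false

variable {X : Type} [Fintype X] [DecidableEq X]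

open Finset

theorem ample_step {C : Finset (Finset X)} (hC : IsAmple C) (x : X) :
    IsAmple (restrictX C x) ∧ IsAmple (reduction C x) ∧
      ∀ Z ∈ shatteredSets C, x ∈ Z → Z.erase x ∈ shatteredSets (reduction C x) := by
  have hdec := card_decomp C x
  have hD := pajor (restrictX C x)
  have hE := pajor (reduction C x)
  have hDs : (shatteredSets (restrictX C x)).card
      = ((shatteredSets C).filter (fun Z => x ∉ Z)).card := by rw [shat_restrictX]
  have hEs := shat_reduction_card_le C x
  have hsplit : ((shatteredSets C).filter (fun Z => x ∉ Z)).card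
      + ((shatteredSets C).filter (fun Z => x ∈ Z)).card = (shatteredSets C).card := by
    rw [add_comm]
    exact Finset.card_filter_add_card_filter_not (fun Z => x ∈ Z)
  have hCa : C.card = (shatteredSets C).card := hC
  have e1 : (restrictX C x).card = (shatteredSets (restrictX C x)).card := by omega
  have e2 : (reduction C x).card = (shatteredSets (reduction C x)).card := by omega
  have e3 : (shatteredSets (reduction C x)).card
      = ((shatteredSets C).filter (fun Z => x ∈ Z)).card := by omega
  refine ⟨e1, e2, ?_⟩
  -- surjectivity of the insert map by cardinality
  have himg : (shatteredSets (reduction C x)).image (fun Z => insert x Z)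
      = (shatteredSets C).filter (fun Z => x ∈ Z) := by
    apply Finset.eq_of_subset_of_card_le
    · intro Z hZ
      obtain ⟨Z', hZ', rfl⟩ := Finset.mem_image.1 hZ
      rw [mem_shatteredSets'] at hZ'
      obtain ⟨hxZ', hsh⟩ := shatters_reduction_lift hZ'
      rw [Finset.mem_filter, mem_shatteredSets']
      exact ⟨hsh, Finset.mem_insert_self _ _⟩
    · have hinj : Set.InjOn (fun Z => insert x Z) ((shatteredSets (reduction C x) : Finset (Finset X)) : Set (Finset X)) := by
        intro Z1 h1 Z2 h2 heq
        rw [Finset.mem_coe, mem_shatteredSets'] at h1 h2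
        have hx1 := (shatters_reduction_lift h1).1
        have hx2 := (shatters_reduction_lift h2).1
        simp only [] at heq
        have : (insert x Z1).erase x = (insert x Z2).erase x := by rw [heq]
        rwa [Finset.erase_insert hx1, Finset.erase_insert hx2] at this
      rw [Finset.card_image_of_injOn hinj]
      omega
  intro Z hZ hxZ
  have : Z ∈ (shatteredSets C).filter (fun Z => x ∈ Z) := Finset.mem_filter.2 ⟨hZ, hxZ⟩
  rw [← himg] at this
  obtain ⟨Z', hZ', hZZ'⟩ := Finset.mem_image.1 this
  have hxZ' : x ∉ Z' := by
    rw [mem_shatteredSets'] at hZ'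
    exact (shatters_reduction_lift hZ').1
  rw [← hZZ', Finset.erase_insert hxZ']
  exact hZ'

/-- strongly shattered sets: supports of cubes of `C` -/
def sShat (C : Finset (Finset X)) : Finset (Finset X) :=
  Finset.univ.filter (fun Z => ∃ t ∈ (Finset.univ : Finset (Finset X)),
    t ∩ Z = ∅ ∧ ∀ s ∈ Z.powerset, t ∪ s ∈ C)

lemma mem_sShat {C : Finset (Finset X)} {Z : Finset X} :
    Z ∈ sShat C ↔ ∃ t, t ∩ Z = ∅ ∧ ∀ s ⊆ Z, t ∪ s ∈ C := by
  simp [sShat, Finset.mem_powerset]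

lemma sShat_subset_shat (C : Finset (Finset X)) : sShat C ⊆ shatteredSets C := by
  intro Z hZ
  obtain ⟨t, ht, hcube⟩ := mem_sShat.1 hZ
  rw [mem_shatteredSets']
  intro s hs
  rw [Finset.mem_powerset] at hs
  refine ⟨t ∪ s, hcube s hs, ?_⟩
  rw [Finset.union_inter_distrib_right, ht, Finset.empty_union,
    Finset.inter_eq_left.2 hs]

lemma sShat_restrictX {C : Finset (Finset X)} {x : X} {Z : Finset X}
    (hZ : Z ∈ sShat C) (hxZ : x ∉ Z) : Z ∈ sShat (restrictX C x) := by
  obtain ⟨t, ht, hcube⟩ := mem_sShat.1 hZ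
  refine mem_sShat.2 ⟨t.erase x, ?_, fun s hs => ?_⟩
  · rw [← Finset.subset_empty, ← ht]
    exact Finset.inter_subset_inter (Finset.erase_subset x t) le_rfl
  · have hxs : x ∉ s := fun h => hxZ (hs h)
    have : (t ∪ s).erase x = t.erase x ∪ s := by
      rw [Finset.erase_union_distrib, Finset.erase_eq_of_notMem hxs]
    rw [← this]
    exact mem_restrictX.2 ⟨t ∪ s, hcube s hs, rfl⟩

lemma sShat_reduction {C : Finset (Finset X)} {x : X} {Z : Finset X}
    (hZ : Z ∈ sShat C) (hxZ : x ∈ Z) : Z.erase x ∈ sShat (reduction C x) := by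
  obtain ⟨t, ht, hcube⟩ := mem_sShat.1 hZ
  have hxt : x ∉ t := fun h =>
    (Finset.eq_empty_iff_forall_notMem.1 ht x) (Finset.mem_inter.2 ⟨h, hxZ⟩)
  refine mem_sShat.2 ⟨t, ?_, fun s hs => ?_⟩
  · rw [← Finset.subset_empty, ← ht]
    exact Finset.inter_subset_inter le_rfl (Finset.erase_subset x Z)
  · have hsZ : s ⊆ Z := hs.trans (Finset.erase_subset x Z)
    have hxs : x ∉ s := fun h => (Finset.mem_erase.1 (hs h)).1 rfl
    refine mem_reduction.2 ⟨hcube s hsZ, ?_, ?_⟩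
    · simp [Finset.mem_union, hxt, hxs]
    · have : insert x (t ∪ s) = t ∪ insert x s := by rw [Finset.union_insert]
      rw [this]
      apply hcube
      intro y hy
      rcases Finset.mem_insert.1 hy with rfl | h'
      · exact hxZ
      · exact hsZ h'

theorem dual_pajorN : ∀ (N : ℕ) (C : Finset (Finset X)), muA C ≤ N →
    (sShat C).card ≤ C.card := by
  intro N
  induction N with
  | zero =>
    intro C hC
    have hCe : C = ∅ := by
      by_contra h
      obtain ⟨c, hc⟩ := Finset.nonempty_iff_ne_empty.2 h
      have : 0 < muA C := Finset.sum_pos' (fun i _ => Nat.zero_le _) ⟨c, hc, by omega⟩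
      omega
    subst hCe
    have : sShat (∅ : Finset (Finset X)) = ∅ := by
      apply Finset.eq_empty_of_forall_notMem
      intro Z hZ
      obtain ⟨t, _, hcube⟩ := mem_sShat.1 hZ
      exact absurd (hcube ∅ (Finset.empty_subset Z)) (Finset.notMem_empty _)
    simp [this]
  | succ N ih =>
    intro C hC
    by_cases hne : ∃ c₀ ∈ C, ∃ x, x ∈ c₀
    · obtain ⟨c₀, hc₀, x, hx⟩ := hne
      have hD := muA_restrictX_lt hc₀ hx
      have hE := muA_reduction_lt hc₀ hx
      have h1 := ih (restrictX C x) (by omega)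
      have h2 := ih (reduction C x) (by omega)
      have hsub : sShat C ⊆ sShat (restrictX C x)
          ∪ (sShat (reduction C x)).image (fun Z => insert x Z) := by
        intro Z hZ
        rw [Finset.mem_union]
        by_cases hxZ : x ∈ Z
        · right
          refine Finset.mem_image.2 ⟨Z.erase x, sShat_reduction hZ hxZ, Finset.insert_erase hxZ⟩
        · left; exact sShat_restrictX hZ hxZ
      calc (sShat C).card
          ≤ (sShat (restrictX C x)
              ∪ (sShat (reduction C x)).image (fun Z => insert x Z)).card :=
            Finset.card_le_card hsub
        _ ≤ (sShat (restrictX C x)).card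
              + ((sShat (reduction C x)).image (fun Z => insert x Z)).card :=
            Finset.card_union_le _ _
        _ ≤ (restrictX C x).card + (reduction C x).card := by
            refine Nat.add_le_add (le_trans ?_ h1) (le_trans (Finset.card_image_le) h2)
            exact le_rfl
        _ = C.card := (card_decomp C x).symm
    · push_neg at hne
      by_cases hCe : C = ∅
      · subst hCe
        have : sShat (∅ : Finset (Finset X)) = ∅ := by
          apply Finset.eq_empty_of_forall_notMem
          intro Z hZ
          obtain ⟨t, _, hcube⟩ := mem_sShat.1 hZ
          exact absurd (hcube ∅ (Finset.empty_subset Z)) (Finset.notMem_empty _)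
        simp [this]
      · -- C = {∅}
        have hsub : sShat C ⊆ {∅} := by
          intro Z hZ
          obtain ⟨t, ht, hcube⟩ := mem_sShat.1 hZ
          have h1 : t ∪ Z ∈ C := hcube Z le_rfl
          have h2 : t ∪ Z = ∅ := Finset.eq_empty_iff_forall_notMem.2 (hne _ h1)
          rw [Finset.mem_singleton]
          rw [Finset.union_eq_empty] at h2
          exact h2.2
        calc (sShat C).card ≤ 1 := by
              have := Finset.card_le_card hsub; simpa using this
          _ ≤ C.card := Finset.card_pos.2 (Finset.nonempty_iff_ne_empty.2 hCe)

theorem dual_pajor (C : Finset (Finset X)) : (sShat C).card ≤ C.card :=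
  dual_pajorN (muA C) C le_rfl

theorem ample_shat_subset_sShatN : ∀ (N : ℕ) (C : Finset (Finset X)), muA C ≤ N →
    IsAmple C → shatteredSets C ⊆ sShat C := by
  intro N
  induction N with
  | zero =>
    intro C hC _
    intro Z hZ
    exfalso
    rw [mem_shatteredSets'] at hZ
    obtain ⟨c, hc, _⟩ := shatters_nonempty hZ
    have : 0 < muA C := Finset.sum_pos' (fun i _ => Nat.zero_le _) ⟨c, hc, by omega⟩
    omega
  | succ N ih =>
    intro C hC hample Z hZ
    by_cases hZe : Z = ∅
    · subst hZe
      rw [mem_shatteredSets'] at hZ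
      obtain ⟨c, hc, _⟩ := shatters_nonempty hZ
      exact mem_sShat.2 ⟨c, Finset.inter_empty c, fun s hs => by
        rw [Finset.subset_empty] at hs
        simp [hs, hc]⟩
    · obtain ⟨x, hxZ⟩ := Finset.nonempty_iff_ne_empty.2 hZe
      rw [mem_shatteredSets'] at hZ
      obtain ⟨c₀, hc₀, hZc₀⟩ := shatters_nonempty hZ
      have hxc₀ : x ∈ c₀ := hZc₀ hxZ
      obtain ⟨_, hEample, hlift⟩ := ample_step hample x
      have hZ' : Z.erase x ∈ shatteredSets (reduction C x) :=
        hlift Z (mem_shatteredSets'.2 hZ) hxZ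
      have hE := muA_reduction_lt hc₀ hxc₀
      have hZ'' : Z.erase x ∈ sShat (reduction C x) :=
        ih (reduction C x) (by omega) hEample hZ'
      obtain ⟨t, ht, hcube⟩ := mem_sShat.1 hZ''
      have hxt : x ∉ t := by
        have h0 := hcube ∅ (Finset.empty_subset _)
        rw [Finset.union_empty] at h0
        exact (mem_reduction.1 h0).2.1
      refine mem_sShat.2 ⟨t, ?_, fun s hs => ?_⟩
      · apply Finset.eq_empty_of_forall_notMem
        intro y hy
        rcases Finset.mem_inter.1 hy with ⟨hyt, hyZ⟩
        by_cases hyx : y = x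
        · exact hxt (hyx ▸ hyt)
        · exact (Finset.eq_empty_iff_forall_notMem.1 ht y)
            (Finset.mem_inter.2 ⟨hyt, Finset.mem_erase.2 ⟨hyx, hyZ⟩⟩)
      · by_cases hxs : x ∈ s
        · have hs' : s.erase x ⊆ Z.erase x := fun y hy => by
            rcases Finset.mem_erase.1 hy with ⟨hyx, hys⟩
            exact Finset.mem_erase.2 ⟨hyx, hs hys⟩
          have h1 := hcube _ hs'
          have h2 := (mem_reduction.1 h1).2.2
          have : insert x (t ∪ s.erase x) = t ∪ s := by
            rw [← Finset.union_insert, Finset.insert_erase hxs]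
          rwa [this] at h2
        · have hs' : s ⊆ Z.erase x := fun y hy =>
            Finset.mem_erase.2 ⟨fun h => hxs (h ▸ hy), hs hy⟩
          exact (mem_reduction.1 (hcube s hs')).1

theorem ample_shat_eq_sShat {C : Finset (Finset X)} (hC : IsAmple C) :
    shatteredSets C = sShat C :=
  Finset.Subset.antisymm (ample_shat_subset_sShatN (muA C) C le_rfl hC) (sShat_subset_shat C)

theorem ample_of_shat_subset_sShat {C : Finset (Finset X)}
    (h : shatteredSets C ⊆ sShat C) : IsAmple C := by
  have h1 := pajor C
  have h2 := dual_pajor C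
  have h3 := Finset.card_le_card h
  unfold IsAmple
  omega

end AmpleAux3
section AmpleAux4
set_option linter.unusedSectionVars false

variable {X : Type} [Fintype X] [DecidableEq X]

open Finset

theorem ample_fiber_neg {C : Finset (Finset X)} (hC : IsAmple C) (x : X) :
    IsAmple (C.filter (fun c => x ∉ c)) := by
  set F := C.filter (fun c => x ∉ c) with hF
  apply ample_of_shat_subset_sShat
  intro Z hZ
  rw [mem_shatteredSets'] at hZ
  have hxZ : x ∉ Z := by
    obtain ⟨c, hc, hZc⟩ := shatters_nonempty hZ
    exact fun hx => (Finset.mem_filter.1 hc).2 (hZc hx)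
  have hZC : Z ∈ shatteredSets C :=
    mem_shatteredSets'.2 (shatters_mono (Finset.filter_subset _ _) hZ)
  have hZs : Z ∈ sShat C := ample_shat_eq_sShat hC ▸ hZC
  obtain ⟨t, ht, hcube⟩ := mem_sShat.1 hZs
  by_cases hxt : x ∈ t
  · -- `insert x Z` is shattered by `C`
    have hins : _root_.Shatters C (insert x Z) := by
      intro s' hs'
      rw [Finset.mem_powerset] at hs'
      by_cases hxs' : x ∈ s'
      · have hsub : s'.erase x ⊆ Z := fun y hy => by
          rcases Finset.mem_erase.1 hy with ⟨hyx, hys⟩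
          rcases Finset.mem_insert.1 (hs' hys) with rfl | h'
          · exact absurd rfl hyx
          · exact h'
        refine ⟨t ∪ s'.erase x, hcube _ hsub, ?_⟩
        have h1 : t ∩ insert x Z = {x} := by
          ext y
          simp only [Finset.mem_inter, Finset.mem_insert, Finset.mem_singleton]
          constructor
          · rintro ⟨hyt, rfl | hyZ⟩
            · rfl
            · exact absurd (Finset.mem_inter.2 ⟨hyt, hyZ⟩)
                (Finset.eq_empty_iff_forall_notMem.1 ht y)
          · rintro rfl; exact ⟨hxt, Or.inl rfl⟩
        have h2 : s'.erase x ∩ insert x Z = s'.erase x :=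
          Finset.inter_eq_left.2 (hsub.trans (Finset.subset_insert x Z))
        rw [Finset.union_inter_distrib_right, h1, h2]
        ext y
        simp only [Finset.mem_union, Finset.mem_singleton, Finset.mem_erase]
        constructor
        · rintro (rfl | ⟨_, h⟩)
          · exact hxs'
          · exact h
        · intro hy
          by_cases hyx : y = x
          · exact Or.inl hyx
          · exact Or.inr ⟨hyx, hy⟩
      · have hsub : s' ⊆ Z := fun y hy => by
          rcases Finset.mem_insert.1 (hs' hy) with rfl | h'
          · exact absurd hy hxs'
          · exact h'
        obtain ⟨c, hc, hcs⟩ := hZ s' (Finset.mem_powerset.2 hsub)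
        have hxc : x ∉ c := (Finset.mem_filter.1 hc).2
        exact ⟨c, (Finset.mem_filter.1 hc).1,
          by rw [insert_inter_of_not_mem' hxc, hcs]⟩
    have hinsS : insert x Z ∈ sShat C :=
      ample_shat_eq_sShat hC ▸ mem_shatteredSets'.2 hins
    obtain ⟨u, hu, hcubeu⟩ := mem_sShat.1 hinsS
    have hxu : x ∉ u := fun h =>
      (Finset.eq_empty_iff_forall_notMem.1 hu x)
        (Finset.mem_inter.2 ⟨h, Finset.mem_insert_self x Z⟩)
    refine mem_sShat.2 ⟨u, ?_, fun s hs => ?_⟩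
    · rw [← Finset.subset_empty, ← hu]
      exact Finset.inter_subset_inter le_rfl (Finset.subset_insert x Z)
    · have h1 : u ∪ s ∈ C := hcubeu s (hs.trans (Finset.subset_insert x Z))
      have hxs : x ∉ s := fun h => hxZ (hs h)
      rw [hF, Finset.mem_filter]
      exact ⟨h1, by simp [Finset.mem_union, hxu, hxs]⟩
  · refine mem_sShat.2 ⟨t, ht, fun s hs => ?_⟩
    have hxs : x ∉ s := fun h => hxZ (hs h)
    rw [hF, Finset.mem_filter]
    exact ⟨hcube s hs, by simp [Finset.mem_union, hxt, hxs]⟩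

theorem ample_fiber_pos {C : Finset (Finset X)} (hC : IsAmple C) (x : X) :
    IsAmple (C.filter (fun c => x ∈ c)) := by
  set F := C.filter (fun c => x ∈ c) with hF
  apply ample_of_shat_subset_sShat
  intro Z hZ
  rw [mem_shatteredSets'] at hZ
  have hxZ : x ∉ Z := by
    obtain ⟨c, hc, hcs⟩ := hZ ∅ (Finset.mem_powerset.2 (Finset.empty_subset Z))
    intro hx
    have hxc : x ∈ c := (Finset.mem_filter.1 hc).2
    exact (Finset.eq_empty_iff_forall_notMem.1 hcs x) (Finset.mem_inter.2 ⟨hxc, hx⟩)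
  have hZC : Z ∈ shatteredSets C :=
    mem_shatteredSets'.2 (shatters_mono (Finset.filter_subset _ _) hZ)
  have hZs : Z ∈ sShat C := ample_shat_eq_sShat hC ▸ hZC
  obtain ⟨t, ht, hcube⟩ := mem_sShat.1 hZs
  by_cases hxt : x ∈ t
  · refine mem_sShat.2 ⟨t, ht, fun s hs => ?_⟩
    rw [hF, Finset.mem_filter]
    exact ⟨hcube s hs, Finset.mem_union.2 (Or.inl hxt)⟩
  · -- `insert x Z` is shattered by `C`
    have hins : _root_.Shatters C (insert x Z) := by
      intro s' hs'
      rw [Finset.mem_powerset] at hs'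
      by_cases hxs' : x ∈ s'
      · have hsub : s'.erase x ⊆ Z := fun y hy => by
          rcases Finset.mem_erase.1 hy with ⟨hyx, hys⟩
          rcases Finset.mem_insert.1 (hs' hys) with rfl | h'
          · exact absurd rfl hyx
          · exact h'
        obtain ⟨c, hc, hcs⟩ := hZ (s'.erase x) (Finset.mem_powerset.2 hsub)
        have hxc : x ∈ c := (Finset.mem_filter.1 hc).2
        refine ⟨c, (Finset.mem_filter.1 hc).1, ?_⟩
        have : c ∩ insert x Z = insert x (c ∩ Z) := by
          ext y
          simp only [Finset.mem_inter, Finset.mem_insert]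
          constructor
          · rintro ⟨hyc, rfl | hyZ⟩
            · exact Or.inl rfl
            · exact Or.inr ⟨hyc, hyZ⟩
          · rintro (rfl | ⟨hyc, hyZ⟩)
            · exact ⟨hxc, Or.inl rfl⟩
            · exact ⟨hyc, Or.inr hyZ⟩
        rw [this, hcs, Finset.insert_erase hxs']
      · have hsub : s' ⊆ Z := fun y hy => by
          rcases Finset.mem_insert.1 (hs' hy) with rfl | h'
          · exact absurd hy hxs'
          · exact h'
        refine ⟨t ∪ s', hcube s' hsub, ?_⟩
        have h1 : t ∩ insert x Z = ∅ := by
          rw [← Finset.subset_empty]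
          intro y hy
          rcases Finset.mem_inter.1 hy with ⟨hyt, hyZ⟩
          rcases Finset.mem_insert.1 hyZ with rfl | hyZ'
          · exact absurd hyt hxt
          · exact absurd (Finset.mem_inter.2 ⟨hyt, hyZ'⟩)
              (Finset.eq_empty_iff_forall_notMem.1 ht y)
        rw [Finset.union_inter_distrib_right, h1, Finset.empty_union,
          Finset.inter_eq_left.2 (hsub.trans (Finset.subset_insert x Z))]
    have hinsS : insert x Z ∈ sShat C :=
      ample_shat_eq_sShat hC ▸ mem_shatteredSets'.2 hins
    obtain ⟨u, hu, hcubeu⟩ := mem_sShat.1 hinsS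
    have hxu : x ∉ u := fun h =>
      (Finset.eq_empty_iff_forall_notMem.1 hu x)
        (Finset.mem_inter.2 ⟨h, Finset.mem_insert_self x Z⟩)
    refine mem_sShat.2 ⟨insert x u, ?_, fun s hs => ?_⟩
    · rw [← Finset.subset_empty]
      intro y hy
      rcases Finset.mem_inter.1 hy with ⟨hyu, hyZ⟩
      rcases Finset.mem_insert.1 hyu with rfl | hyu'
      · exact absurd hyZ hxZ
      · exact absurd (Finset.mem_inter.2 ⟨hyu', Finset.mem_insert.2 (Or.inr hyZ)⟩)
          (Finset.eq_empty_iff_forall_notMem.1 hu y)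
    · have h1 : u ∪ insert x s ∈ C := by
        apply hcubeu
        intro y hy
        rcases Finset.mem_insert.1 hy with h | h'
        · rw [h]; exact Finset.mem_insert_self x Z
        · exact Finset.mem_insert.2 (Or.inr (hs h'))
      have heq : insert x u ∪ s = u ∪ insert x s := by
        rw [Finset.insert_union, Finset.union_insert]
      rw [hF, Finset.mem_filter, heq]
      exact ⟨h1, Finset.mem_union.2 (Or.inr (Finset.mem_insert_self x s))⟩

end AmpleAux4
section AmpleAux5
set_option linter.unusedSectionVars false

variable {X : Type} [Fintype X] [DecidableEq X]

open Finset

lemma restrictTo_univ (C : Finset (Finset X)) : restrictTo C Finset.univ = C := by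
  unfold restrictTo
  simp

lemma restrictTo_insert (C : Finset (Finset X)) {x : X} {Y : Finset X} (hx : x ∉ Y) :
    restrictTo C Y = restrictX (restrictTo C (insert x Y)) x := by
  unfold restrictTo restrictX
  rw [Finset.image_image]
  apply Finset.image_congr
  intro c _
  simp only [Function.comp_apply]
  ext y
  simp only [Finset.mem_erase, Finset.mem_inter, Finset.mem_insert]
  constructor
  · rintro ⟨hyc, hyY⟩
    exact ⟨fun h => hx (h ▸ hyY), hyc, Or.inr hyY⟩
  · rintro ⟨hyx, hyc, rfl | hyY⟩
    · exact absurd rfl hyx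
    · exact ⟨hyc, hyY⟩

theorem ample_restrictTo {C : Finset (Finset X)} (hC : IsAmple C) (Y : Finset X) :
    IsAmple (restrictTo C Y) := by
  suffices h : ∀ (n : ℕ) (Y : Finset X), (Finset.univ \ Y).card ≤ n → IsAmple (restrictTo C Y) by
    exact h (Finset.univ \ Y).card Y le_rfl
  intro n
  induction n with
  | zero =>
    intro Y hY
    have : Finset.univ \ Y = ∅ := Finset.card_eq_zero.1 (Nat.le_zero.1 hY)
    have hYu : Y = Finset.univ :=
      Finset.eq_univ_of_forall (fun y => by
        by_contra hy
        exact (Finset.eq_empty_iff_forall_notMem.1 this y)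
          (Finset.mem_sdiff.2 ⟨Finset.mem_univ y, hy⟩))
    rw [hYu, restrictTo_univ]
    exact hC
  | succ n ih =>
    intro Y hY
    by_cases hYu : Y = Finset.univ
    · rw [hYu, restrictTo_univ]; exact hC
    · obtain ⟨x, hx⟩ : ∃ x, x ∉ Y := by
        by_contra h
        push_neg at h
        exact hYu (Finset.eq_univ_of_forall h)
      have hcard : (Finset.univ \ insert x Y).card ≤ n := by
        have h1 : Finset.univ \ insert x Y = (Finset.univ \ Y).erase x := by
          ext y
          simp only [Finset.mem_sdiff, Finset.mem_univ, true_and, Finset.mem_erase,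
            Finset.mem_insert]
          tauto
        have h2 : x ∈ Finset.univ \ Y := Finset.mem_sdiff.2 ⟨Finset.mem_univ x, hx⟩
        rw [h1, Finset.card_erase_of_mem h2]
        omega
      rw [restrictTo_insert C hx]
      exact (ample_step (ih (insert x Y) hcard) x).1

lemma shat_restrictTo (C : Finset (Finset X)) (Y : Finset X) :
    shatteredSets (restrictTo C Y) = (shatteredSets C).filter (fun Z => Z ⊆ Y) := by
  ext Z
  simp only [mem_shatteredSets', Finset.mem_filter, mem_shatteredSets']
  constructor
  · intro h
    have hZY : Z ⊆ Y := by
      obtain ⟨d, hd, hZd⟩ := shatters_nonempty h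
      obtain ⟨c, _, rfl⟩ := Finset.mem_image.1 hd
      exact hZd.trans Finset.inter_subset_right
    refine ⟨fun s hs => ?_, hZY⟩
    obtain ⟨d, hd, hds⟩ := h s hs
    obtain ⟨c, hc, rfl⟩ := Finset.mem_image.1 hd
    refine ⟨c, hc, ?_⟩
    rw [← hds, Finset.inter_assoc, Finset.inter_eq_right.2 hZY]
  · rintro ⟨h, hZY⟩ s hs
    obtain ⟨c, hc, hcs⟩ := h s hs
    refine ⟨c ∩ Y, Finset.mem_image.2 ⟨c, hc, rfl⟩, ?_⟩
    rw [Finset.inter_assoc, Finset.inter_eq_right.2 hZY, hcs]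

/-- the cube block of `C` over support `Y` with base `t` is ample -/
theorem ample_block {C : Finset (Finset X)} (hC : IsAmple C) (Y t : Finset X) :
    IsAmple (C.filter (fun c => c \ Y = t)) := by
  suffices h : ∀ (n : ℕ) (Y t : Finset X), (Finset.univ \ Y).card ≤ n →
      IsAmple (C.filter (fun c => c \ Y = t)) by
    exact h (Finset.univ \ Y).card Y t le_rfl
  intro n
  induction n with
  | zero =>
    intro Y t hY
    have : Finset.univ \ Y = ∅ := Finset.card_eq_zero.1 (Nat.le_zero.1 hY)
    have hYu : Y = Finset.univ :=
      Finset.eq_univ_of_forall (fun y => by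
        by_contra hy
        exact (Finset.eq_empty_iff_forall_notMem.1 this y)
          (Finset.mem_sdiff.2 ⟨Finset.mem_univ y, hy⟩))
    subst hYu
    by_cases ht : t = ∅
    · subst ht
      have : C.filter (fun c => c \ Finset.univ = ∅) = C := by
        apply Finset.filter_true_of_mem
        intro c _
        simp
      rw [this]; exact hC
    · have : C.filter (fun c => c \ Finset.univ = t) = ∅ := by
        apply Finset.filter_false_of_mem
        intro c _
        intro h
        apply ht
        rw [← h]
        ext y
        simp [Finset.mem_sdiff]
      rw [this]
      unfold IsAmple
      have h2 : shatteredSets (∅ : Finset (Finset X)) = ∅ := by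
        apply Finset.eq_empty_of_forall_notMem
        intro Z hZ
        rw [mem_shatteredSets'] at hZ
        obtain ⟨c, hc, _⟩ := shatters_nonempty hZ
        exact Finset.notMem_empty c hc
      rw [h2]
  | succ n ih =>
    intro Y t hY
    by_cases hYu : Y = Finset.univ
    · exact ih Y t (by rw [hYu]; simp)
    · obtain ⟨x, hx⟩ : ∃ x, x ∉ Y := by
        by_contra h
        push_neg at h
        exact hYu (Finset.eq_univ_of_forall h)
      have hcard : (Finset.univ \ insert x Y).card ≤ n := by
        have h1 : Finset.univ \ insert x Y = (Finset.univ \ Y).erase x := by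
          ext y
          simp only [Finset.mem_sdiff, Finset.mem_univ, true_and, Finset.mem_erase,
            Finset.mem_insert]
          tauto
        have h2 : x ∈ Finset.univ \ Y := Finset.mem_sdiff.2 ⟨Finset.mem_univ x, hx⟩
        rw [h1, Finset.card_erase_of_mem h2]
        omega
      have hsplit : ∀ c : Finset X,
          (c \ Y = t) ↔ ((c \ insert x Y = t.erase x) ∧ ((x ∈ c) ↔ (x ∈ t))) := by
        intro c
        constructor
        · intro h
          constructor
          · rw [← h]
            ext y
            simp only [Finset.mem_sdiff, Finset.mem_insert, Finset.mem_erase]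
            tauto
          · rw [← h]
            simp only [Finset.mem_sdiff]
            tauto
        · rintro ⟨h1, h2⟩
          ext y
          by_cases hyx : y = x
          · subst hyx
            simp only [Finset.mem_sdiff, hx, not_false_iff, and_true]
            exact h2
          · have e1 : y ∈ c \ Y ↔ y ∈ c \ insert x Y := by
              simp only [Finset.mem_sdiff, Finset.mem_insert]
              tauto
            have e2 : y ∈ t ↔ y ∈ t.erase x := by
              simp only [Finset.mem_erase]
              tauto
            rw [e1, h1, ← e2]
      have hfe : C.filter (fun c => c \ Y = t)
          = (C.filter (fun c => c \ insert x Y = t.erase x)).filter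
              (fun c => if x ∈ t then x ∈ c else x ∉ c) := by
        rw [Finset.filter_filter]
        apply Finset.filter_congr
        intro c _
        by_cases hxt : x ∈ t <;> simp only [hxt, if_true, if_false] <;>
          rw [hsplit c] <;> tauto
      rw [hfe]
      have hinner := ih (insert x Y) (t.erase x) hcard
      by_cases hxt : x ∈ t
      · have : ((C.filter (fun c => c \ insert x Y = t.erase x)).filter
            (fun c => if x ∈ t then x ∈ c else x ∉ c))
            = (C.filter (fun c => c \ insert x Y = t.erase x)).filter (fun c => x ∈ c) := by
          apply Finset.filter_congr
          intro c _
          simp [hxt]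
        rw [this]
        exact ample_fiber_pos hinner x
      · have : ((C.filter (fun c => c \ insert x Y = t.erase x)).filter
            (fun c => if x ∈ t then x ∈ c else x ∉ c))
            = (C.filter (fun c => c \ insert x Y = t.erase x)).filter (fun c => x ∉ c) := by
          apply Finset.filter_congr
          intro c _
          simp [hxt]
        rw [this]
        exact ample_fiber_neg hinner x

lemma mem_cube_iff {Y t c : Finset X} (ht : t ∩ Y = ∅) :
    c ∈ Y.powerset.image (fun s => t ∪ s) ↔ c \ Y = t := by
  constructor
  · intro h
    obtain ⟨s, hs, rfl⟩ := Finset.mem_image.1 h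
    rw [Finset.mem_powerset] at hs
    rw [Finset.union_sdiff_distrib]
    have h1 : t \ Y = t := by
      rw [Finset.sdiff_eq_self_iff_disjoint, Finset.disjoint_iff_inter_eq_empty]
      exact ht
    have h2 : s \ Y = ∅ := by
      rw [Finset.sdiff_eq_empty_iff_subset]
      exact hs
    rw [h1, h2, Finset.union_empty]
  · intro h
    refine Finset.mem_image.2 ⟨c ∩ Y, Finset.mem_powerset.2 Finset.inter_subset_right, ?_⟩
    rw [← h]
    ext y
    simp only [Finset.mem_union, Finset.mem_sdiff, Finset.mem_inter]
    tauto

end AmpleAux5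
section MainAux
set_option linter.unusedSectionVars false

variable {X : Type} [Fintype X] [DecidableEq X]

open Finset

lemma cumulative_cancel {Y : Finset X} (f g : Finset X → ℕ)
    (h : ∀ s ⊆ Y, ∑ v ∈ s.powerset, f v = ∑ v ∈ s.powerset, g v) :
    ∀ s ⊆ Y, f s = g s := by
  intro s
  induction s using Finset.strongInduction with
  | _ s ih =>
    intro hsY
    have hs : s ∈ s.powerset := Finset.mem_powerset_self s
    have hsplit : s.powerset = insert s (s.powerset.erase s) := (Finset.insert_erase hs).symm
    have h1 := h s hsY
    rw [hsplit, Finset.sum_insert (Finset.notMem_erase s _),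
      Finset.sum_insert (Finset.notMem_erase s _)] at h1
    have h2 : ∑ v ∈ s.powerset.erase s, f v = ∑ v ∈ s.powerset.erase s, g v := by
      apply Finset.sum_congr rfl
      intro v hv
      rcases Finset.mem_erase.1 hv with ⟨hvs, hvp⟩
      have hvsub : v ⊆ s := Finset.mem_powerset.1 hvp
      exact ih v (Finset.ssubset_iff_subset_ne.2 ⟨hvsub, hvs⟩) (hvsub.trans hsY)
    omega

lemma R1_unique {C : Finset (Finset X)} {r : Finset X → Finset X}
    (hR1 : ∀ c ∈ C, ∀ c' ∈ C, c ≠ c' → c ∩ (r c ∪ r c') ≠ c' ∩ (r c ∪ r c'))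
    {Y c c' : Finset X} (hc : c ∈ C) (hc' : c' ∈ C)
    (h1 : r c ⊆ Y) (h2 : r c' ⊆ Y) (h3 : c ∩ Y = c' ∩ Y) : c = c' := by
  by_contra hne
  apply hR1 c hc c' hc' hne
  have hU : Y ∩ (r c ∪ r c') = r c ∪ r c' :=
    Finset.inter_eq_right.2 (Finset.union_subset h1 h2)
  calc c ∩ (r c ∪ r c') = (c ∩ Y) ∩ (r c ∪ r c') := by rw [Finset.inter_assoc, hU]
    _ = (c' ∩ Y) ∩ (r c ∪ r c') := by rw [h3]
    _ = c' ∩ (r c ∪ r c') := by rw [Finset.inter_assoc, hU]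

lemma R1_to_R2 {C : Finset (Finset X)} (hC : IsAmple C) {r : Finset X → Finset X}
    (hmaps : ∀ c ∈ C, r c ∈ shatteredSets C)
    (hinj : Set.InjOn r (C : Set (Finset X)))
    (hsurj : ∀ Y ∈ shatteredSets C, ∃ c ∈ C, r c = Y)
    (hR1 : ∀ c ∈ C, ∀ c' ∈ C, c ≠ c' → c ∩ (r c ∪ r c') ≠ c' ∩ (r c ∪ r c')) :
    ∀ (Y : Finset X), ∀ c ∈ C, ∃! c', c' ∈ C ∧ c' ∩ Y = c ∩ Y ∧ r c' ⊆ Y := by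
  intro Y c hc
  set A := C.filter (fun d => r d ⊆ Y) with hA
  have hAsubC : A ⊆ C := Finset.filter_subset _ _
  have h1 : A.image r = (shatteredSets C).filter (fun Z => Z ⊆ Y) := by
    apply Finset.Subset.antisymm
    · intro Z hZ
      obtain ⟨d, hd, rfl⟩ := Finset.mem_image.1 hZ
      rcases Finset.mem_filter.1 hd with ⟨hdC, hdY⟩
      exact Finset.mem_filter.2 ⟨hmaps d hdC, hdY⟩
    · intro Z hZ
      rcases Finset.mem_filter.1 hZ with ⟨hZs, hZY⟩
      obtain ⟨d, hd, rfl⟩ := hsurj Z hZs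
      exact Finset.mem_image.2 ⟨d, Finset.mem_filter.2 ⟨hd, hZY⟩, rfl⟩
  have h2 : A.card = ((shatteredSets C).filter (fun Z => Z ⊆ Y)).card := by
    rw [← h1, Finset.card_image_of_injOn (hinj.mono (Finset.coe_subset.2 hAsubC))]
  have h3 : ((shatteredSets C).filter (fun Z => Z ⊆ Y)).card = (restrictTo C Y).card := by
    rw [← shat_restrictTo]
    exact (ample_restrictTo hC Y).symm
  have hinjA : Set.InjOn (fun d => d ∩ Y) (A : Set (Finset X)) := by
    intro a ha b hb hab
    rw [Finset.mem_coe, hA, Finset.mem_filter] at ha hb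
    exact R1_unique hR1 ha.1 hb.1 ha.2 hb.2 hab
  have h4 : A.image (fun d => d ∩ Y) = restrictTo C Y := by
    apply Finset.eq_of_subset_of_card_le
    · intro τ hτ
      obtain ⟨d, hd, rfl⟩ := Finset.mem_image.1 hτ
      exact Finset.mem_image.2 ⟨d, hAsubC hd, rfl⟩
    · rw [Finset.card_image_of_injOn hinjA]
      omega
  have hmem : c ∩ Y ∈ A.image (fun d => d ∩ Y) := by
    rw [h4]
    exact Finset.mem_image.2 ⟨c, hc, rfl⟩
  obtain ⟨c', hc', hc'eq⟩ := Finset.mem_image.1 hmem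
  rcases Finset.mem_filter.1 hc' with ⟨hc'C, hc'Y⟩
  refine ⟨c', ⟨hc'C, hc'eq, hc'Y⟩, ?_⟩
  rintro y ⟨hyC, hyeq, hyY⟩
  exact R1_unique hR1 hyC hc'C hyY hc'Y (hyeq.trans hc'eq.symm)

lemma R2_to_R3 {C : Finset (Finset X)} (hC : IsAmple C) {r : Finset X → Finset X}
    (hR2 : ∀ (Y : Finset X), ∀ c ∈ C, ∃! c', c' ∈ C ∧ c' ∩ Y = c ∩ Y ∧ r c' ⊆ Y) :
    ∀ B Y, IsCubeS B Y → ∀ c ∈ C ∩ B, ∀ c' ∈ C ∩ B, r c ∩ Y = r c' ∩ Y → c = c' := by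
  intro B Y hB c hc c' hc' hrr
  obtain ⟨t, ht, rfl⟩ := hB
  set G := C.filter (fun d => d \ Y = t) with hG
  have hmemG : ∀ d, d ∈ C ∩ (Y.powerset.image (fun s => t ∪ s)) ↔ d ∈ G := by
    intro d
    rw [Finset.mem_inter, hG, Finset.mem_filter, mem_cube_iff ht]
  have hcG : c ∈ G := (hmemG c).1 hc
  have hc'G : c' ∈ G := (hmemG c').1 hc'
  have hGA : IsAmple G := ample_block hC Y t
  have hGsubC : G ⊆ C := Finset.filter_subset _ _
  -- the counting identity
  have hcount : ∀ s ⊆ Y, (G.filter (fun d => r d ∩ Y ⊆ s)).card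
      = ((shatteredSets G).filter (fun Z => Z ⊆ s)).card := by
    intro s hsY
    set W := (Finset.univ \ Y) ∪ s with hW
    have hsW : s ⊆ W := Finset.subset_union_right
    have hWY : W ∩ Y = s := by
      ext y
      simp only [hW, Finset.mem_inter, Finset.mem_union, Finset.mem_sdiff, Finset.mem_univ,
        true_and]
      constructor
      · rintro ⟨hy | hy, hyY⟩
        · exact absurd hyY hy
        · exact hy
      · intro hy; exact ⟨Or.inr hy, hsY hy⟩
    have hrW : ∀ d : Finset X, r d ⊆ W ↔ r d ∩ Y ⊆ s := by
      intro d
      constructor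
      · intro h y hy
        rcases Finset.mem_inter.1 hy with ⟨hy1, hy2⟩
        rw [← hWY]
        exact Finset.mem_inter.2 ⟨h hy1, hy2⟩
      · intro h y hy
        by_cases hyY : y ∈ Y
        · exact hsW (h (Finset.mem_inter.2 ⟨hy, hyY⟩))
        · exact Finset.mem_union.2 (Or.inl (Finset.mem_sdiff.2 ⟨Finset.mem_univ y, hyY⟩))
    have htrace : ∀ d ∈ G, d ∩ W = t ∪ (d ∩ s) := by
      intro d hd
      rcases Finset.mem_filter.1 hd with ⟨hdC, hdt⟩
      ext y
      rw [← hdt]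
      simp only [hW, Finset.mem_inter, Finset.mem_union, Finset.mem_sdiff, Finset.mem_univ,
        true_and]
      tauto
    have hdiffW : ∀ d₁ d₂ : Finset X, d₁ ∩ W = d₂ ∩ W → d₁ \ Y = d₂ \ Y := by
      intro d₁ d₂ h
      ext y
      simp only [Finset.mem_sdiff]
      constructor
      · rintro ⟨hy1, hy2⟩
        have hyW : y ∈ W := Finset.mem_union.2 (Or.inl (Finset.mem_sdiff.2 ⟨Finset.mem_univ y, hy2⟩))
        have := h ▸ (Finset.mem_inter.2 ⟨hy1, hyW⟩ : y ∈ d₁ ∩ W)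
        exact ⟨(Finset.mem_inter.1 this).1, hy2⟩
      · rintro ⟨hy1, hy2⟩
        have hyW : y ∈ W := Finset.mem_union.2 (Or.inl (Finset.mem_sdiff.2 ⟨Finset.mem_univ y, hy2⟩))
        have := h.symm ▸ (Finset.mem_inter.2 ⟨hy1, hyW⟩ : y ∈ d₂ ∩ W)
        exact ⟨(Finset.mem_inter.1 this).1, hy2⟩
    set L := G.filter (fun d => r d ∩ Y ⊆ s) with hL
    have hinjL : Set.InjOn (fun d => d ∩ s) (L : Set (Finset X)) := by
      intro a ha b hb hab
      simp only [] at hab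
      rw [Finset.mem_coe, hL, Finset.mem_filter] at ha hb
      have haW : a ∩ W = b ∩ W := by
        rw [htrace a ha.1, htrace b hb.1, hab]
      obtain ⟨u, _, huni⟩ := hR2 W a (hGsubC ha.1)
      have h1 : a = u := huni a ⟨hGsubC ha.1, rfl, (hrW a).2 ha.2⟩
      have h2 : b = u := huni b ⟨hGsubC hb.1, haW.symm, (hrW b).2 hb.2⟩
      rw [h1, h2]
    have himgL : L.image (fun d => d ∩ s) = restrictTo G s := by
      apply Finset.Subset.antisymm
      · intro τ hτ
        obtain ⟨d, hd, rfl⟩ := Finset.mem_image.1 hτ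
        exact Finset.mem_image.2 ⟨d, Finset.mem_filter.1 hd |>.1, rfl⟩
      · intro τ hτ
        obtain ⟨g, hg, rfl⟩ := Finset.mem_image.1 hτ
        obtain ⟨u, ⟨huC, huW, hurW⟩, _⟩ := hR2 W g (hGsubC hg)
        have huG : u ∈ G := by
          rw [hG, Finset.mem_filter]
          refine ⟨huC, ?_⟩
          rw [hdiffW u g huW]
          exact (Finset.mem_filter.1 hg).2
        have huL : u ∈ L := by
          rw [hL, Finset.mem_filter]
          exact ⟨huG, (hrW u).1 hurW⟩
        refine Finset.mem_image.2 ⟨u, huL, ?_⟩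
        have hWs : W ∩ s = s := Finset.inter_eq_right.2 hsW
        calc u ∩ s = u ∩ (W ∩ s) := by rw [hWs]
          _ = (u ∩ W) ∩ s := by rw [Finset.inter_assoc]
          _ = (g ∩ W) ∩ s := by rw [huW]
          _ = g ∩ (W ∩ s) := by rw [Finset.inter_assoc]
          _ = g ∩ s := by rw [hWs]
    calc L.card = (L.image (fun d => d ∩ s)).card :=
          (Finset.card_image_of_injOn hinjL).symm
      _ = (restrictTo G s).card := by rw [himgL]
      _ = (shatteredSets (restrictTo G s)).card := ample_restrictTo hGA s
      _ = ((shatteredSets G).filter (fun Z => Z ⊆ s)).card := by rw [shat_restrictTo]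
  -- Möbius inversion
  have hfiber : ∀ s ⊆ Y, (G.filter (fun d => r d ∩ Y = s)).card
      = (if s ∈ shatteredSets G then 1 else 0) := by
    apply cumulative_cancel
    intro s hsY
    have hleft : ∑ v ∈ s.powerset, (G.filter (fun d => r d ∩ Y = v)).card
        = (G.filter (fun d => r d ∩ Y ⊆ s)).card := by
      rw [Finset.card_eq_sum_card_fiberwise
        (f := fun d => r d ∩ Y) (t := s.powerset)
        (fun d hd => Finset.mem_powerset.2 (Finset.mem_filter.1 hd).2)]
      apply Finset.sum_congr rfl
      intro v hv
      have hvs : v ⊆ s := Finset.mem_powerset.1 hv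
      congr 1
      ext d
      simp only [Finset.mem_filter]
      constructor
      · rintro ⟨h1, h2⟩
        exact ⟨⟨h1, by rw [h2]; exact hvs⟩, h2⟩
      · rintro ⟨⟨h1, _⟩, h2⟩
        exact ⟨h1, h2⟩
    have hright : ∑ v ∈ s.powerset, (if v ∈ shatteredSets G then 1 else 0)
        = ((shatteredSets G).filter (fun Z => Z ⊆ s)).card := by
      rw [← Finset.card_filter]
      congr 1
      ext Z
      simp only [Finset.mem_filter, Finset.mem_powerset]
      tauto
    rw [hleft, hright]
    exact hcount s hsY
  -- conclude
  have hs₀ : r c ∩ Y ⊆ Y := Finset.inter_subset_right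
  have hcard := hfiber (r c ∩ Y) hs₀
  have hcmem : c ∈ G.filter (fun d => r d ∩ Y = r c ∩ Y) :=
    Finset.mem_filter.2 ⟨hcG, rfl⟩
  have hc'mem : c' ∈ G.filter (fun d => r d ∩ Y = r c ∩ Y) :=
    Finset.mem_filter.2 ⟨hc'G, hrr.symm⟩
  have hle : (G.filter (fun d => r d ∩ Y = r c ∩ Y)).card ≤ 1 := by
    rw [hcard]
    split <;> omega
  exact Finset.card_le_one.1 hle c hcmem c' hc'mem

end MainAux
section EasyImpl
set_option linter.unusedSectionVars false

variable {X : Type} [Fintype X] [DecidableEq X]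

open Finset

lemma sdiff_univ_sdiff (a b : Finset X) : a \ (Finset.univ \ b) = a ∩ b := by
  ext y
  simp only [Finset.mem_sdiff, Finset.mem_inter, Finset.mem_univ, true_and, not_not]

lemma R3_to_R4 {C : Finset (Finset X)} {r : Finset X → Finset X}
    (hR3 : ∀ B Y, IsCubeS B Y → ∀ c ∈ C ∩ B, ∀ c' ∈ C ∩ B, r c ∩ Y = r c' ∩ Y → c = c') :
    ∀ c ∈ C, ∀ c' ∈ C, c ≠ c' →
      c ∩ ((r c \ r c') ∪ (r c' \ r c)) ≠ c' ∩ ((r c \ r c') ∪ (r c' \ r c)) := by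
  intro c hc c' hc' hne heq
  apply hne
  set Δ := (r c \ r c') ∪ (r c' \ r c) with hΔ
  set Y := Finset.univ \ Δ with hY
  have ht : (c ∩ Δ) ∩ Y = ∅ := by
    apply Finset.eq_empty_of_forall_notMem
    intro y hy
    rcases Finset.mem_inter.1 hy with ⟨hyt, hyY⟩
    exact (Finset.mem_sdiff.1 hyY).2 ((Finset.mem_inter.1 hyt).2)
  have hcB : c \ Y = c ∩ Δ := by rw [hY, sdiff_univ_sdiff]
  have hc'B : c' \ Y = c ∩ Δ := by rw [hY, sdiff_univ_sdiff, ← heq]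
  have hr : r c ∩ Y = r c' ∩ Y := by
    ext y
    simp only [hY, hΔ, Finset.mem_inter, Finset.mem_sdiff, Finset.mem_univ, true_and,
      Finset.mem_union, not_or, Finset.mem_sdiff, not_and, not_not]
    tauto
  exact hR3 (Y.powerset.image (fun s => (c ∩ Δ) ∪ s)) Y ⟨c ∩ Δ, ht, rfl⟩
    c (Finset.mem_inter.2 ⟨hc, (mem_cube_iff ht).2 hcB⟩)
    c' (Finset.mem_inter.2 ⟨hc', (mem_cube_iff ht).2 hc'B⟩) hr

lemma R4_to_R1 {C : Finset (Finset X)} {r : Finset X → Finset X}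
    (hR4 : ∀ c ∈ C, ∀ c' ∈ C, c ≠ c' →
      c ∩ ((r c \ r c') ∪ (r c' \ r c)) ≠ c' ∩ ((r c \ r c') ∪ (r c' \ r c))) :
    ∀ c ∈ C, ∀ c' ∈ C, c ≠ c' → c ∩ (r c ∪ r c') ≠ c' ∩ (r c ∪ r c') := by
  intro c hc c' hc' hne heq
  apply hR4 c hc c' hc' hne
  have hsub : (r c \ r c') ∪ (r c' \ r c) ⊆ r c ∪ r c' := by
    intro y hy
    rcases Finset.mem_union.1 hy with h | h
    · exact Finset.mem_union.2 (Or.inl (Finset.mem_sdiff.1 h).1)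
    · exact Finset.mem_union.2 (Or.inr (Finset.mem_sdiff.1 h).1)
  have hU : (r c ∪ r c') ∩ ((r c \ r c') ∪ (r c' \ r c)) = (r c \ r c') ∪ (r c' \ r c) :=
    Finset.inter_eq_right.2 hsub
  calc c ∩ ((r c \ r c') ∪ (r c' \ r c))
      = (c ∩ (r c ∪ r c')) ∩ ((r c \ r c') ∪ (r c' \ r c)) := by
        rw [Finset.inter_assoc, hU]
    _ = (c' ∩ (r c ∪ r c')) ∩ ((r c \ r c') ∪ (r c' \ r c)) := by rw [heq]
    _ = c' ∩ ((r c \ r c') ∪ (r c' \ r c)) := by rw [Finset.inter_assoc, hU]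

lemma R4_bijective {C : Finset (Finset X)} (hC : IsAmple C) {r : Finset X → Finset X}
    (hmaps : ∀ c ∈ C, r c ∈ shatteredSets C)
    (hR4 : ∀ c ∈ C, ∀ c' ∈ C, c ≠ c' →
      c ∩ ((r c \ r c') ∪ (r c' \ r c)) ≠ c' ∩ ((r c \ r c') ∪ (r c' \ r c))) :
    Set.InjOn r (C : Set (Finset X)) ∧ ∀ Y ∈ shatteredSets C, ∃ c ∈ C, r c = Y := by
  have hinj : Set.InjOn r (C : Set (Finset X)) := by
    intro a ha b hb hab
    by_contra hne
    apply hR4 a (Finset.mem_coe.1 ha) b (Finset.mem_coe.1 hb) hne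
    rw [hab, Finset.sdiff_self, Finset.union_empty, Finset.inter_empty, Finset.inter_empty]
  refine ⟨hinj, ?_⟩
  have himg : C.image r = shatteredSets C := by
    apply Finset.eq_of_subset_of_card_le
    · intro Z hZ
      obtain ⟨d, hd, rfl⟩ := Finset.mem_image.1 hZ
      exact hmaps d hd
    · rw [Finset.card_image_of_injOn hinj]
      exact le_of_eq hC.symm
  intro Z hZ
  rw [← himg] at hZ
  obtain ⟨d, hd, rfl⟩ := Finset.mem_image.1 hZ
  exact ⟨d, hd, rfl⟩

end EasyImpl
/-- For an ample class `C` and a bijection `r : C → X(C)`, the conditions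
(R1) ∪-non-clashing, (R2) reconstruction, (R3) cube injectivity and (R4) Δ-non-clashing
are equivalent; moreover any map `r : C → X(C)` satisfying (R4) is automatically a
bijection onto `X(C)`. -/
theorem stmt_14 (C : Finset (Finset X)) (hC : IsAmple C) (r : Finset X → Finset X)
    (hmaps : ∀ c ∈ C, r c ∈ shatteredSets C) :
    ((Set.InjOn r ↑C ∧ ∀ Y ∈ shatteredSets C, ∃ c ∈ C, r c = Y) →
      (((∀ c ∈ C, ∀ c' ∈ C, c ≠ c' →
          c ∩ (r c ∪ r c') ≠ c' ∩ (r c ∪ r c')) ↔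
        (∀ (Y : Finset X), ∀ c ∈ C,
          ∃! c', c' ∈ C ∧ c' ∩ Y = c ∩ Y ∧ r c' ⊆ Y)) ∧
      ((∀ (Y : Finset X), ∀ c ∈ C,
          ∃! c', c' ∈ C ∧ c' ∩ Y = c ∩ Y ∧ r c' ⊆ Y) ↔
        (∀ B Y, IsCubeS B Y → ∀ c ∈ C ∩ B, ∀ c' ∈ C ∩ B,
          r c ∩ Y = r c' ∩ Y → c = c')) ∧
      ((∀ B Y, IsCubeS B Y → ∀ c ∈ C ∩ B, ∀ c' ∈ C ∩ B,
          r c ∩ Y = r c' ∩ Y → c = c') ↔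
        (∀ c ∈ C, ∀ c' ∈ C, c ≠ c' →
          c ∩ ((r c \ r c') ∪ (r c' \ r c)) ≠ c' ∩ ((r c \ r c') ∪ (r c' \ r c)))))) ∧
    ((∀ c ∈ C, ∀ c' ∈ C, c ≠ c' →
        c ∩ ((r c \ r c') ∪ (r c' \ r c)) ≠ c' ∩ ((r c \ r c') ∪ (r c' \ r c))) →
      Set.InjOn r ↑C ∧ ∀ Y ∈ shatteredSets C, ∃ c ∈ C, r c = Y) := by
  constructor
  · rintro ⟨hinj, hsurj⟩
    have h12 : (∀ c ∈ C, ∀ c' ∈ C, c ≠ c' → c ∩ (r c ∪ r c') ≠ c' ∩ (r c ∪ r c')) →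
        (∀ (Y : Finset X), ∀ c ∈ C, ∃! c', c' ∈ C ∧ c' ∩ Y = c ∩ Y ∧ r c' ⊆ Y) :=
      fun h => R1_to_R2 hC hmaps hinj hsurj h
    have h23 : (∀ (Y : Finset X), ∀ c ∈ C, ∃! c', c' ∈ C ∧ c' ∩ Y = c ∩ Y ∧ r c' ⊆ Y) →
        (∀ B Y, IsCubeS B Y → ∀ c ∈ C ∩ B, ∀ c' ∈ C ∩ B, r c ∩ Y = r c' ∩ Y → c = c') :=
      fun h => R2_to_R3 hC h
    have h34 := @R3_to_R4 X _ _ C r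
    have h41 := @R4_to_R1 X _ _ C r
    exact ⟨⟨h12, fun h2 => h41 (h34 (h23 h2))⟩,
      ⟨h23, fun h3 => h12 (h41 (h34 h3))⟩,
      ⟨h34, fun h4 => h23 (h12 (h41 h4))⟩⟩
  · intro hR4
    exact R4_bijective hC hmaps hR4
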